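/- Let γ > 0 and consider the two-period storage game with n storages all having cost coefficient ε_i = 0. The unique Nash equilibrium is d_i' = 1/(γ(n+1)) for every i, the aggregate Nash-equilibrium profit equals n/(γ (n+1)²), and this aggregate profit tends to 0 as n → ∞. (Second part of Lemma 1: the aggregate profit under the Nash-equilibrium solution approaches zero as the number of storages increases.) -/

import Mathlib

open Finset

/-- second part of Lemma 1: with zero cost coefficients, the
unique Nash equilibrium of the two-period storage game is
`d i = 1/(γ(n+1))` for every `i`, the aggregate equilibrium profit equals
`n/(γ(n+1)²)`, and this aggregate profit tends to `0` as `n → ∞`. -/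
theorem ne_profit_vanishes (γ : ℝ) (hγ : 0 < γ) :
    (∀ n : ℕ, 1 ≤ n → ∀ d : Fin n → ℝ,
      ((∀ i, ∀ x : ℝ,
          x - γ * x * (x + ∑ j ∈ univ.erase i, d j) ≤
            d i - γ * d i * (d i + ∑ j ∈ univ.erase i, d j)) ↔
        d = fun _ => 1 / (γ * ((n : ℝ) + 1)))) ∧
    (∀ n : ℕ, 1 ≤ n →
      (∑ _i : Fin n, (1 / (γ * ((n : ℝ) + 1)) -
          γ * (1 / (γ * ((n : ℝ) + 1))) * ∑ _j : Fin n, 1 / (γ * ((n : ℝ) + 1))))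
        = (n : ℝ) / (γ * ((n : ℝ) + 1) ^ 2)) ∧
    Filter.Tendsto (fun n : ℕ => (n : ℝ) / (γ * ((n : ℝ) + 1) ^ 2))
      Filter.atTop (nhds 0) := by
  have hγ' : γ ≠ 0 := ne_of_gt hγ
  refine ⟨?_, ?_, ?_⟩
  · intro n hn d
    have hn1 : (0:ℝ) < (n:ℝ) + 1 := by positivity
    constructor
    · intro h
      set S := ∑ j, d j with hS
      have herase : ∀ i : Fin n, ∑ j ∈ univ.erase i, d j = S - d i := by
        intro i
        have := Finset.sum_erase_add univ d (mem_univ i)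
        linarith [this]
      have hkey : ∀ i : Fin n, d i = 1/γ - S := by
        intro i
        set e := 1 - γ * d i - γ * S with he
        set t := e / (2*γ) with ht
        have h2 : 2*γ*t = e := by rw [ht]; field_simp
        have A := h i (d i + t)
        rw [herase i] at A
        have h3 : 2*γ*t*t = (1 - γ * d i - γ * S)*t := by rw [← he, h2]
        have ht2 : γ * t^2 ≤ 0 := by linarith [A, h3]
        have ht0 : t^2 ≤ 0 := nonpos_of_mul_nonpos_right (by linarith [ht2]) hγ
        have htz : t = 0 := by nlinarith [sq_nonneg t]
        have he0 : e = 0 := by rw [← h2, htz]; ring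
        have h1 : γ * (d i + S) = 1 := by
          have h5 := he.symm.trans he0
          linarith [h5]
        field_simp
        linarith [h1]
      have hSval : S = (n:ℝ) / (γ * ((n:ℝ)+1)) := by
        have h1 : S = ∑ _i : Fin n, (1/γ - S) := by
          rw [hS]; exact Finset.sum_congr rfl fun i _ => hkey i
        rw [Finset.sum_const, Finset.card_univ, Fintype.card_fin, nsmul_eq_mul] at h1
        field_simp at h1 ⊢
        linarith
      funext i
      rw [hkey i, hSval]
      field_simp
      ring
    · intro hd i x
      subst hd
      set c := 1 / (γ * ((n:ℝ)+1)) with hcdef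
      have hc : γ * ((n:ℝ)+1) * c = 1 := by rw [hcdef]; field_simp
      have hE : ∑ j ∈ univ.erase i, (fun _ : Fin n => c) j = (n:ℝ) * c - c := by
        rw [Finset.sum_const, Finset.card_erase_of_mem (mem_univ i), Finset.card_univ,
          Fintype.card_fin, nsmul_eq_mul, Nat.cast_sub hn, Nat.cast_one]
        ring
      simp only at hE ⊢
      rw [hE]
      have hc2 : (γ*((n:ℝ)+1)*c) * (c - x) = 1 * (c - x) := by rw [hc]
      nlinarith [mul_nonneg hγ.le (sq_nonneg (c - x)), hc2]
  · intro n hn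
    have hn1 : (0:ℝ) < (n:ℝ) + 1 := by positivity
    rw [Finset.sum_const, Finset.card_univ, Fintype.card_fin, nsmul_eq_mul]
    rw [Finset.sum_const, Finset.card_univ, Fintype.card_fin, nsmul_eq_mul]
    field_simp
    ring
  · have hlim : Filter.Tendsto (fun n : ℕ => (1/γ) * (1/((n:ℝ)+1)))
        Filter.atTop (nhds 0) := by
      have := tendsto_one_div_add_atTop_nhds_zero_nat.const_mul (1/γ)
      simpa using this
    refine squeeze_zero (fun n => by positivity) (fun n => ?_) hlim
    have hp : (0:ℝ) < γ * ((n:ℝ)+1)^2 := by positivity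
    rw [div_le_iff₀ hp]
    have hq : (1/γ * (1/((n:ℝ)+1))) * (γ * ((n:ℝ)+1)^2) = (n:ℝ) + 1 := by
      field_simp
    rw [hq]
    linarith [Nat.cast_nonneg (α := ℝ) n]
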